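/- Let ι be a countable type, c : ι → ℝ^d an injective map, and p : ι → ℝ a probability mass function (p ≥ 0 with ∑_z p(z) = 1). Fix t > 0, define the posterior weights w_t(z′ | x) := p(z′) φ_t(x − c(z′)) / ∑_u p(u) φ_t(x − c(u)) and kernel q_{t,z}(z′) := ∫_{ℝ^d} w_t(z′ | x) φ_t(x − c(z)) dx, and suppose S := ∑_z √(p(z)) < ∞. Then for every r ≥ 0, ∑_z p(z) ∑_{z′ : ‖c(z′) − c(z)‖ > r} q_{t,z}(z′) ≤ (S²/2) · exp( −r² / (8t) ). -/

import Mathlib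

open MeasureTheory

/-- Density of the centered Gaussian `N(0, t I_d)` on `ℝ^d`. -/
noncomputable def gaussDensity (d : ℕ) (t : ℝ) (x : EuclideanSpace ℝ (Fin d)) : ℝ :=
  (2 * Real.pi * t) ^ (-(d : ℝ) / 2) * Real.exp (-‖x‖ ^ 2 / (2 * t))

section Aux
variable {d : ℕ} {t : ℝ}

lemma gauss_nonneg (ht : 0 < t) (x : EuclideanSpace ℝ (Fin d)) : 0 ≤ gaussDensity d t x := by
  unfold gaussDensity
  have := Real.pi_pos
  positivity

lemma gauss_le (ht : 0 < t) (x : EuclideanSpace ℝ (Fin d)) :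
    gaussDensity d t x ≤ (2 * Real.pi * t) ^ (-(d : ℝ) / 2) := by
  unfold gaussDensity
  have h1 : Real.exp (-‖x‖ ^ 2 / (2 * t)) ≤ 1 := by
    rw [Real.exp_le_one_iff]
    have : (0:ℝ) ≤ ‖x‖ ^ 2 := by positivity
    have : 0 < 2 * t := by linarith
    rw [div_nonpos_iff]; right; constructor <;> nlinarith
  have hC : (0:ℝ) ≤ (2 * Real.pi * t) ^ (-(d : ℝ) / 2) := by
    have := Real.pi_pos; positivity
  nlinarith [Real.exp_pos (-‖x‖ ^ 2 / (2 * t))]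

lemma integrable_gauss (ht : 0 < t) (m : EuclideanSpace ℝ (Fin d)) :
    Integrable (fun x : EuclideanSpace ℝ (Fin d) => gaussDensity d t (x - m)) := by
  have hb : (0:ℝ) < 1 / (2 * t) := by positivity
  have h0 : Integrable (fun v : EuclideanSpace ℝ (Fin d) =>
      Complex.exp (-(1/(2*t) : ℂ) * ‖v‖ ^ 2)) := by
    simpa using GaussianFourier.integrable_cexp_neg_mul_sq_norm_add
      (V := EuclideanSpace ℝ (Fin d)) (b := (1/(2*t) : ℂ)) (by simpa using hb) 0 0
  have h1 : Integrable (fun v : EuclideanSpace ℝ (Fin d) =>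
      Real.exp (-‖v‖ ^ 2 / (2 * t))) := by
    have := h0.re
    convert this using 2 with v
    have : (-(1/(2*t) : ℂ) * (‖v‖:ℂ) ^ 2) = ((-‖v‖ ^ 2 / (2 * t) : ℝ) : ℂ) := by
      push_cast; ring
    rw [this, RCLike.re_to_complex, Complex.exp_ofReal_re]
  have h2 : Integrable (fun v : EuclideanSpace ℝ (Fin d) => gaussDensity d t v) := by
    unfold gaussDensity
    exact h1.const_mul _
  exact h2.comp_sub_right m

lemma integral_gauss (ht : 0 < t) (m : EuclideanSpace ℝ (Fin d)) :
    ∫ x : EuclideanSpace ℝ (Fin d), gaussDensity d t (x - m) = 1 := by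
  rw [integral_sub_right_eq_self (fun x => gaussDensity d t x) m]
  unfold gaussDensity
  rw [integral_const_mul]
  have hb : (0:ℝ) < 1 / (2 * t) := by positivity
  have h1 : ∫ v : EuclideanSpace ℝ (Fin d), Real.exp (-‖v‖ ^ 2 / (2 * t))
      = (Real.pi / (1/(2*t))) ^ ((d:ℝ) / 2) := by
    have h := GaussianFourier.integral_rexp_neg_mul_sq_norm (V := EuclideanSpace ℝ (Fin d)) hb
    rw [finrank_euclideanSpace_fin] at h
    rw [← h]
    congr 1 with v; congr 1; ring
  rw [h1]
  have hpt : Real.pi / (1/(2*t)) = 2 * Real.pi * t := by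
    field_simp
  rw [hpt, ← Real.rpow_add (by have := Real.pi_pos; positivity), neg_div,
    neg_add_cancel, Real.rpow_zero]

end Aux

section Hellinger
variable {d : ℕ} {t : ℝ}

lemma sqrt_gauss_mul (ht : 0 < t) (a b x : EuclideanSpace ℝ (Fin d)) :
    Real.sqrt (gaussDensity d t (x - a) * gaussDensity d t (x - b))
      = Real.exp (-‖a - b‖ ^ 2 / (8 * t)) *
        gaussDensity d t (x - (2⁻¹ : ℝ) • (a + b)) := by
  have key := parallelogram_law_with_norm ℝ (x - a) (x - b)
  have h1 : (x - a) + (x - b) = (2 : ℝ) • (x - (2⁻¹ : ℝ) • (a + b)) := by module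
  have h2 : (x - a) - (x - b) = b - a := by abel
  rw [h1, h2] at key
  have h3 : ‖(2 : ℝ) • (x - (2⁻¹ : ℝ) • (a + b))‖ = 2 * ‖x - (2⁻¹ : ℝ) • (a + b)‖ := by
    rw [norm_smul]; simp
  have h4 : ‖b - a‖ = ‖a - b‖ := norm_sub_rev _ _
  rw [h3, h4] at key
  have hnorm : ‖x - a‖ ^ 2 + ‖x - b‖ ^ 2
      = 2 * ‖x - (2⁻¹ : ℝ) • (a + b)‖ ^ 2 + ‖a - b‖ ^ 2 / 2 := by nlinarith [key]
  unfold gaussDensity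
  set C := (2 * Real.pi * t) ^ (-(d : ℝ) / 2) with hCdef
  have hC : 0 ≤ C := by have := Real.pi_pos; positivity
  rw [show (C * Real.exp (-‖x - a‖ ^ 2 / (2 * t))) * (C * Real.exp (-‖x - b‖ ^ 2 / (2 * t)))
      = (C * C) * Real.exp ((-‖x - a‖ ^ 2 / (2 * t)) + (-‖x - b‖ ^ 2 / (2 * t))) from by
    rw [Real.exp_add]; ring]
  rw [Real.sqrt_mul (mul_self_nonneg C), Real.sqrt_mul_self hC, ← Real.exp_half]
  rw [show ((-‖x - a‖ ^ 2 / (2 * t)) + (-‖x - b‖ ^ 2 / (2 * t))) / 2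
      = (-‖a - b‖ ^ 2 / (8 * t)) + (-‖x - (2⁻¹ : ℝ) • (a + b)‖ ^ 2 / (2 * t)) from by
    linear_combination (-1 / (4 * t)) * hnorm]
  rw [Real.exp_add]; ring

lemma integrable_sqrt_gauss (ht : 0 < t) (a b : EuclideanSpace ℝ (Fin d)) :
    Integrable (fun x : EuclideanSpace ℝ (Fin d) =>
      Real.sqrt (gaussDensity d t (x - a) * gaussDensity d t (x - b))) := by
  simp_rw [sqrt_gauss_mul ht]
  exact (integrable_gauss ht _).const_mul _

lemma integral_sqrt_gauss (ht : 0 < t) (a b : EuclideanSpace ℝ (Fin d)) :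
    ∫ x : EuclideanSpace ℝ (Fin d),
      Real.sqrt (gaussDensity d t (x - a) * gaussDensity d t (x - b))
      = Real.exp (-‖a - b‖ ^ 2 / (8 * t)) := by
  simp_rw [sqrt_gauss_mul ht]
  rw [integral_const_mul, integral_gauss ht, mul_one]

end Hellinger


/-- Posterior weight `w_t(z′ | x) = p(z′) φ_t(x − c(z′)) / ∑_u p(u) φ_t(x − c(u))`. -/
noncomputable def postWeight {ι : Type*} (d : ℕ) (t : ℝ) (p : ι → ℝ)
    (c : ι → EuclideanSpace ℝ (Fin d)) (z' : ι) (x : EuclideanSpace ℝ (Fin d)) : ℝ :=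
  p z' * gaussDensity d t (x - c z') / ∑' u, p u * gaussDensity d t (x - c u)

/-- Kernel `q_{t,z}(z′) = ∫ w_t(z′ | x) φ_t(x − c(z)) dx`. -/
noncomputable def postKernel {ι : Type*} (d : ℕ) (t : ℝ) (p : ι → ℝ)
    (c : ι → EuclideanSpace ℝ (Fin d)) (z z' : ι) : ℝ :=
  ∫ x, postWeight d t p c z' x * gaussDensity d t (x - c z)

lemma amgm_div {a b D : ℝ} (ha : 0 ≤ a) (hb : 0 ≤ b) (hD : a + b ≤ D) :
    a * b / D ≤ Real.sqrt (a * b) / 2 := by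
  rcases eq_or_lt_of_le ha with h | h
  · simp [← h]
  rcases eq_or_lt_of_le hb with h' | h'
  · simp [← h']
  have hab : 0 < a * b := mul_pos h h'
  have hs : 0 < Real.sqrt (a * b) := Real.sqrt_pos.mpr hab
  have h2 : 2 * Real.sqrt (a * b) ≤ D := by
    rw [Real.sqrt_mul ha]
    nlinarith [sq_nonneg (Real.sqrt a - Real.sqrt b), Real.sq_sqrt ha, Real.sq_sqrt hb,
      Real.sqrt_nonneg a, Real.sqrt_nonneg b]
  calc a * b / D ≤ a * b / (2 * Real.sqrt (a * b)) :=
        div_le_div_of_nonneg_left hab.le (by linarith) h2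
    _ = Real.sqrt (a * b) / 2 := by
        rw [show a * b = Real.sqrt (a * b) ^ 2 from (Real.sq_sqrt hab.le).symm]
        field_simp
        rw [Real.sqrt_sq hs.le]

section Pair
variable {ι : Type*} {d : ℕ} {t : ℝ}

lemma postWeight_nonneg (ht : 0 < t) (p : ι → ℝ) (hp : ∀ z, 0 ≤ p z)
    (c : ι → EuclideanSpace ℝ (Fin d)) (z' : ι) (x : EuclideanSpace ℝ (Fin d)) :
    0 ≤ postWeight d t p c z' x := by
  unfold postWeight
  apply div_nonneg (mul_nonneg (hp z') (gauss_nonneg ht _))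
  exact tsum_nonneg fun u => mul_nonneg (hp u) (gauss_nonneg ht _)

lemma pair_bound (ht : 0 < t) (p : ι → ℝ) (hp : ∀ z, 0 ≤ p z) (hps : Summable p)
    (c : ι → EuclideanSpace ℝ (Fin d)) {z z' : ι} (hzz' : z ≠ z') :
    p z * postKernel d t p c z z'
      ≤ 2⁻¹ * (Real.sqrt (p z) * Real.sqrt (p z')) *
        Real.exp (-‖c z - c z'‖ ^ 2 / (8 * t)) := by
  classical
  rw [postKernel, ← integral_const_mul]
  have hbint : Integrable (fun x : EuclideanSpace ℝ (Fin d) =>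
      2⁻¹ * (Real.sqrt (p z) * Real.sqrt (p z')) *
        Real.sqrt (gaussDensity d t (x - c z) * gaussDensity d t (x - c z'))) :=
    (integrable_sqrt_gauss ht _ _).const_mul _
  have hle : ∀ x : EuclideanSpace ℝ (Fin d),
      p z * (postWeight d t p c z' x * gaussDensity d t (x - c z))
        ≤ 2⁻¹ * (Real.sqrt (p z) * Real.sqrt (p z')) *
          Real.sqrt (gaussDensity d t (x - c z) * gaussDensity d t (x - c z')) := by
    intro x
    set a := p z * gaussDensity d t (x - c z) with hadef
    set b := p z' * gaussDensity d t (x - c z') with hbdef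
    set D := ∑' u, p u * gaussDensity d t (x - c u) with hDdef
    have hEq : p z * (postWeight d t p c z' x * gaussDensity d t (x - c z)) = a * b / D := by
      rw [postWeight]; ring
    have ha : 0 ≤ a := mul_nonneg (hp z) (gauss_nonneg ht _)
    have hb : 0 ≤ b := mul_nonneg (hp z') (gauss_nonneg ht _)
    have hsum : Summable (fun u => p u * gaussDensity d t (x - c u)) := by
      apply Summable.of_nonneg_of_le (fun u => mul_nonneg (hp u) (gauss_nonneg ht _))
        (fun u => mul_le_mul_of_nonneg_left (gauss_le ht _) (hp u))
      exact hps.mul_right _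
    have hD : a + b ≤ D := by
      have := Summable.sum_le_tsum ({z, z'} : Finset ι)
        (fun u _ => mul_nonneg (hp u) (gauss_nonneg ht _)) hsum
      rwa [Finset.sum_pair hzz'] at this
    have hsqrt : Real.sqrt (a * b)
        = (Real.sqrt (p z) * Real.sqrt (p z')) *
          Real.sqrt (gaussDensity d t (x - c z) * gaussDensity d t (x - c z')) := by
      rw [show a * b = (p z * p z') * (gaussDensity d t (x - c z) * gaussDensity d t (x - c z'))
        from by rw [hadef, hbdef]; ring]
      rw [Real.sqrt_mul (mul_nonneg (hp z) (hp z')), Real.sqrt_mul (hp z)]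
    calc p z * (postWeight d t p c z' x * gaussDensity d t (x - c z))
        = a * b / D := hEq
      _ ≤ Real.sqrt (a * b) / 2 := amgm_div ha hb hD
      _ = 2⁻¹ * (Real.sqrt (p z) * Real.sqrt (p z')) *
          Real.sqrt (gaussDensity d t (x - c z) * gaussDensity d t (x - c z')) := by
          rw [hsqrt]; ring
  have hnn : ∀ x : EuclideanSpace ℝ (Fin d),
      0 ≤ p z * (postWeight d t p c z' x * gaussDensity d t (x - c z)) := fun x =>
    mul_nonneg (hp z) (mul_nonneg (postWeight_nonneg ht p hp c z' x) (gauss_nonneg ht _))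
  calc ∫ x, p z * (postWeight d t p c z' x * gaussDensity d t (x - c z))
      ≤ ∫ x, 2⁻¹ * (Real.sqrt (p z) * Real.sqrt (p z')) *
          Real.sqrt (gaussDensity d t (x - c z) * gaussDensity d t (x - c z')) :=
        integral_mono_of_nonneg (Filter.Eventually.of_forall hnn) hbint
          (Filter.Eventually.of_forall hle)
    _ = 2⁻¹ * (Real.sqrt (p z) * Real.sqrt (p z')) *
        Real.exp (-‖c z - c z'‖ ^ 2 / (8 * t)) := by
        rw [integral_const_mul, integral_sqrt_gauss ht]

lemma postKernel_nonneg (ht : 0 < t) (p : ι → ℝ) (hp : ∀ z, 0 ≤ p z)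
    (c : ι → EuclideanSpace ℝ (Fin d)) (z z' : ι) : 0 ≤ postKernel d t p c z z' :=
  integral_nonneg fun x =>
    mul_nonneg (postWeight_nonneg ht p hp c z' x) (gauss_nonneg ht _)

end Pair

/-- Averaged tail bound: with `S = ∑_z √(p(z)) < ∞`, for every `r ≥ 0`,
`∑_z p(z) ∑_{z′ : ‖c(z′) − c(z)‖ > r} q_{t,z}(z′) ≤ (S²/2) exp(−r²/(8t))`. -/
theorem averaged_postKernel_tail_bound
    {ι : Type*} [Countable ι] {d : ℕ} (c : ι → EuclideanSpace ℝ (Fin d))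
    (hc : Function.Injective c) (p : ι → ℝ) (hp : ∀ z, 0 ≤ p z) (hp1 : ∑' z, p z = 1)
    (t : ℝ) (ht : 0 < t)
    (S : ℝ) (hSsum : Summable (fun z => Real.sqrt (p z)))
    (hS : S = ∑' z, Real.sqrt (p z))
    (r : ℝ) (hr : 0 ≤ r) :
    ∑' z, p z * ∑' z', (if r < ‖c z' - c z‖ then postKernel d t p c z z' else 0)
      ≤ S ^ 2 / 2 * Real.exp (-r ^ 2 / (8 * t)) := by
  set E := Real.exp (-r ^ 2 / (8 * t)) with hE'
  have hE : 0 ≤ E := (Real.exp_pos _).le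
  have hps : Summable p := by
    by_contra h
    rw [tsum_eq_zero_of_not_summable h] at hp1
    norm_num at hp1
  have hSnn : 0 ≤ S := hS ▸ tsum_nonneg fun z => Real.sqrt_nonneg _
  have hterm : ∀ z z' : ι,
      p z * (if r < ‖c z' - c z‖ then postKernel d t p c z z' else 0)
        ≤ 2⁻¹ * Real.sqrt (p z) * E * Real.sqrt (p z') := by
    intro z z'
    by_cases hcond : r < ‖c z' - c z‖
    · simp only [hcond, if_true]
      have hne : z ≠ z' := by
        intro h
        rw [h, sub_self, norm_zero] at hcond
        linarith
      have h2 : Real.exp (-‖c z - c z'‖ ^ 2 / (8 * t)) ≤ E := by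
        rw [hE', Real.exp_le_exp, div_le_div_iff₀ (by positivity) (by positivity)]
        have hn : r ^ 2 ≤ ‖c z - c z'‖ ^ 2 := by
          rw [norm_sub_rev]
          nlinarith [norm_nonneg (c z' - c z)]
        nlinarith
      calc p z * postKernel d t p c z z'
          ≤ 2⁻¹ * (Real.sqrt (p z) * Real.sqrt (p z')) *
              Real.exp (-‖c z - c z'‖ ^ 2 / (8 * t)) := pair_bound ht p hp hps c hne
        _ ≤ 2⁻¹ * (Real.sqrt (p z) * Real.sqrt (p z')) * E :=
            mul_le_mul_of_nonneg_left h2 (by positivity)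
        _ = 2⁻¹ * Real.sqrt (p z) * E * Real.sqrt (p z') := by ring
    · simp only [hcond, if_false, mul_zero]
      positivity
  have hinner_sumR : ∀ z : ι, Summable (fun z' => 2⁻¹ * Real.sqrt (p z) * E * Real.sqrt (p z')) :=
    fun z => hSsum.mul_left _
  have hinner_nonneg : ∀ z z' : ι,
      0 ≤ p z * (if r < ‖c z' - c z‖ then postKernel d t p c z z' else 0) := by
    intro z z'
    apply mul_nonneg (hp z)
    split
    · exact postKernel_nonneg ht p hp c z z'
    · exact le_refl 0
  have inner_bound : ∀ z : ι,
      p z * ∑' z', (if r < ‖c z' - c z‖ then postKernel d t p c z z' else 0)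
        ≤ 2⁻¹ * Real.sqrt (p z) * S * E := by
    intro z
    rw [← tsum_mul_left]
    calc ∑' z', p z * (if r < ‖c z' - c z‖ then postKernel d t p c z z' else 0)
        ≤ ∑' z', 2⁻¹ * Real.sqrt (p z) * E * Real.sqrt (p z') :=
          Summable.tsum_le_tsum (hterm z)
            (Summable.of_nonneg_of_le (hinner_nonneg z) (hterm z) (hinner_sumR z))
            (hinner_sumR z)
      _ = 2⁻¹ * Real.sqrt (p z) * S * E := by
          rw [tsum_mul_left, ← hS]; ring
  have houter_sumR : Summable (fun z => 2⁻¹ * Real.sqrt (p z) * S * E) := by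
    have : (fun z : ι => 2⁻¹ * Real.sqrt (p z) * S * E)
        = fun z => (2⁻¹ * S * E) * Real.sqrt (p z) := by
      funext z; ring
    rw [this]
    exact hSsum.mul_left _
  have houter_nonneg : ∀ z : ι,
      0 ≤ p z * ∑' z', (if r < ‖c z' - c z‖ then postKernel d t p c z z' else 0) :=
    fun z => mul_nonneg (hp z) (tsum_nonneg fun z' => by
      split
      · exact postKernel_nonneg ht p hp c z z'
      · exact le_refl 0)
  calc ∑' z, p z * ∑' z', (if r < ‖c z' - c z‖ then postKernel d t p c z z' else 0)
      ≤ ∑' z, 2⁻¹ * Real.sqrt (p z) * S * E :=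
        Summable.tsum_le_tsum inner_bound
          (Summable.of_nonneg_of_le houter_nonneg inner_bound houter_sumR) houter_sumR
    _ = S ^ 2 / 2 * E := by
        have h1 : (fun z : ι => 2⁻¹ * Real.sqrt (p z) * S * E)
            = fun z => (2⁻¹ * S * E) * Real.sqrt (p z) := by
          funext z; ring
        rw [h1, tsum_mul_left, ← hS]; ring
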